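/- Let x_1, ..., x_N be points in ℝ^d. The maximum halfspace depth max_η D(η, {x_i}) · N is at least ⌈N/(d+1)⌉, where D(η, {x_i}) = min_{u ∈ S^{d-1}} (1/N) #{ i : ⟨u, x_i⟩ ≤ ⟨u, η⟩ }. -/

import Mathlib

open Finset

/-- Centerpoint theorem / lower bound on the maximal halfspace (Tukey) depth: for any
points `x_1, …, x_N ∈ ℝ^d` there is `η` such that every closed halfspace
`{x : ⟨u, x⟩ ≤ ⟨u, η⟩}` through `η` contains at least `⌈N/(d+1)⌉` of the points. -/
theorem stmt14 (d N : ℕ) (hN : 0 < N) (x : Fin N → EuclideanSpace ℝ (Fin d)) :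
    ∃ η : EuclideanSpace ℝ (Fin d),
      ∀ u : EuclideanSpace ℝ (Fin d), ‖u‖ = 1 →
        ⌈(N : ℝ) / (d + 1)⌉₊ ≤
          Nat.card {i : Fin N // (inner ℝ u (x i) : ℝ) ≤ (inner ℝ u η : ℝ)} := by
  classical
  set k : ℕ := ⌈(N : ℝ) / (d + 1)⌉₊ with hk
  have hk1 : 1 ≤ k := by
    rw [hk, Nat.one_le_ceil_iff]
    positivity
  -- key arithmetic: (d+1)*(k-1) < N
  have harith : (d + 1) * (k - 1) < N := by
    have h1 : ((k : ℝ) - 1) < (N : ℝ) / (d + 1) := by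
      have := Nat.lt_ceil.mp (show k - 1 < k from Nat.sub_lt hk1 one_pos)
      rw [Nat.cast_sub hk1] at this
      simpa using this
    have hd : (0 : ℝ) < (d : ℝ) + 1 := by positivity
    have h2 : ((d : ℝ) + 1) * ((k : ℝ) - 1) < N := by
      rw [mul_comm]
      exact (lt_div_iff₀ hd).mp h1
    have := Nat.cast_lt (α := ℝ) (m := (d + 1) * (k - 1)) (n := N)
    apply this.mp
    push_cast [Nat.cast_sub hk1]
    linarith
  -- family of convex hulls
  set F : Finset (Fin N) → Set (EuclideanSpace ℝ (Fin d)) :=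
    fun S => convexHull ℝ (x '' S) with hF
  set s : Finset (Finset (Fin N)) := Finset.univ.filter (fun S => N < #S + k) with hs
  have hcard : ∀ S ∈ s, #(Sᶜ) ≤ k - 1 := by
    intro S hS
    rw [hs, mem_filter] at hS
    rw [Finset.card_compl, Fintype.card_fin]
    omega
  have hhelly : (⋂ S ∈ s, F S).Nonempty := by
    apply Convex.helly_theorem' (𝕜 := ℝ)
    · intro S _; exact convex_convexHull ℝ _
    · intro I hI hIcard
      rw [finrank_euclideanSpace_fin] at hIcard
      -- find a common index
      have : ∃ i : Fin N, ∀ S ∈ I, i ∈ S := by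
        by_contra hcon
        push_neg at hcon
        have hsub : (Finset.univ : Finset (Fin N)) ⊆ I.biUnion (fun S => Sᶜ) := by
          intro i _
          obtain ⟨S, hSI, hiS⟩ := hcon i
          exact Finset.mem_biUnion.mpr ⟨S, hSI, Finset.mem_compl.mpr hiS⟩
        have hle : N ≤ ∑ S ∈ I, #(Sᶜ) := by
          calc N = #(Finset.univ : Finset (Fin N)) := by simp
            _ ≤ #(I.biUnion (fun S => Sᶜ)) := Finset.card_le_card hsub
            _ ≤ ∑ S ∈ I, #(Sᶜ) := Finset.card_biUnion_le
        have hle2 : ∑ S ∈ I, #(Sᶜ) ≤ #I * (k - 1) := by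
          calc ∑ S ∈ I, #(Sᶜ) ≤ ∑ S ∈ I, (k - 1) :=
                Finset.sum_le_sum (fun S hS => hcard S (hI hS))
            _ = #I * (k - 1) := by rw [Finset.sum_const, smul_eq_mul]
        have : #I * (k - 1) ≤ (d + 1) * (k - 1) :=
          Nat.mul_le_mul_right _ hIcard
        omega
      obtain ⟨i, hi⟩ := this
      exact ⟨x i, Set.mem_biInter fun S hS =>
        subset_convexHull ℝ _ ⟨i, by simpa using hi S hS, rfl⟩⟩
  obtain ⟨η, hη⟩ := hhelly
  refine ⟨η, fun u _ => ?_⟩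
  by_contra hcon
  push_neg at hcon
  -- count of good indices
  have hcount : Nat.card {i : Fin N // (inner ℝ u (x i) : ℝ) ≤ (inner ℝ u η : ℝ)}
      = #(Finset.univ.filter (fun i => (inner ℝ u (x i) : ℝ) ≤ (inner ℝ u η : ℝ))) := by
    rw [Nat.card_eq_fintype_card, Fintype.card_subtype]
  set S : Finset (Fin N) := Finset.univ.filter
    (fun i => ¬ ((inner ℝ u (x i) : ℝ) ≤ (inner ℝ u η : ℝ))) with hS
  have hScard : N < #S + k := by
    have h1 : #(Finset.univ.filter (fun i => (inner ℝ u (x i) : ℝ) ≤ (inner ℝ u η : ℝ))) + #S = N := by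
      rw [hS, Finset.card_filter_add_card_filter_not (p := fun i =>
        (inner ℝ u (x i) : ℝ) ≤ (inner ℝ u η : ℝ))]
      simp
    rw [hcount] at hcon
    omega
  have hSs : S ∈ s := by rw [hs, Finset.mem_filter]; exact ⟨Finset.mem_univ _, hScard⟩
  have hηS : η ∈ F S := by
    exact Set.mem_iInter₂.mp hη S hSs
  -- but F S is in the open halfspace {y | ⟪u,η⟫ < ⟪u,y⟫}
  have hconv : Convex ℝ {y : EuclideanSpace ℝ (Fin d) | (inner ℝ u η : ℝ) < (inner ℝ u y : ℝ)} := by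
    apply convex_halfSpace_gt (f := fun y : EuclideanSpace ℝ (Fin d) => (inner ℝ u y : ℝ))
    exact ⟨fun a b => inner_add_right u a b, fun c a => real_inner_smul_right u a c⟩
  have hsub : F S ⊆ {y : EuclideanSpace ℝ (Fin d) | (inner ℝ u η : ℝ) < (inner ℝ u y : ℝ)} := by
    rw [hF]
    apply convexHull_min _ hconv
    rintro y ⟨i, hiS, rfl⟩
    have : ¬ ((inner ℝ u (x i) : ℝ) ≤ (inner ℝ u η : ℝ)) := by
      simp only [hS, Finset.coe_filter, Set.mem_setOf_eq] at hiS
      exact hiS.2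
    exact not_le.mp this
  exact absurd (hsub hηS) (by simp)
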